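/- For every even n ≥ 2 and every polynomial f(x) = Σ_{i=0}^{n} εᵢ xⁱ with each εᵢ ∈ {1, −1} and εₙ = 1, the discriminant of f is odd. -/

import Mathlib

open Polynomial

lemma exists_field_hom_two_eq_zero (A : Type) [CommRing A] (h : ¬ IsUnit (2 : A)) :
    ∃ (K : Type) (_ : Field K) (ψ : A →+* K), ψ 2 = 0 := by
  obtain ⟨m, hmax, hle⟩ := Ideal.exists_le_maximal _ (Ideal.span_singleton_ne_top h)
  haveI := hmax
  exact ⟨A ⧸ m, Ideal.Quotient.field m, Ideal.Quotient.mk m,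
    Ideal.Quotient.eq_zero_iff_mem.mpr (hle (Ideal.subset_span rfl))⟩

set_option maxHeartbeats 1000000
set_option synthInstance.maxHeartbeats 400000

/-- For even `n ≥ 2` and `f = Σ_{i=0}^{n} εᵢ xⁱ` with all `εᵢ ∈ {1, -1}` and `εₙ = 1`,
the discriminant `∏_{i<j}(αᵢ - αⱼ)²` of `f` (over the complex roots `αᵢ`) is odd. -/
theorem stmt18 (n : ℕ) (hn : 2 ≤ n) (heven : Even n)
    (ε : Fin (n + 1) → ℤ) (hε : ∀ i, ε i = 1 ∨ ε i = -1)
    (htop : ε (Fin.last n) = 1)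
    (α : Fin n → ℂ)
    (hroots : Polynomial.map (Int.castRingHom ℂ)
        (∑ i : Fin (n + 1), C (ε i) * X ^ (i : ℕ)) = ∏ i : Fin n, (X - C (α i)))
    (D : ℤ)
    (hD : (D : ℂ) = ∏ i : Fin n, ∏ j : Fin n, if i < j then (α i - α j) ^ 2 else 1) :
    Odd D := by
  -- the integer polynomial
  set f : ℤ[X] := ∑ i : Fin (n + 1), C (ε i) * X ^ (i : ℕ) with hf
  -- f is monic
  have hdegle : f.natDegree ≤ n := by
    apply natDegree_sum_le_of_forall_le
    intro i _
    calc (C (ε i) * X ^ (i : ℕ)).natDegree ≤ (i : ℕ) := by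
          apply natDegree_C_mul_le (ε i) (X ^ (i:ℕ)) |>.trans
          simp
      _ ≤ n := by omega
  have hcoeffn : f.coeff n = 1 := by
    rw [hf, finset_sum_coeff]
    rw [Finset.sum_eq_single (Fin.last n)]
    · simp [htop]
    · intro b _ hb
      have : (b : ℕ) ≠ n := by
        intro h
        apply hb
        apply Fin.ext
        simp [h]
      simp [coeff_C_mul, coeff_X_pow, this, Ne.symm this]
    · simp
  have hmonic : f.Monic := by
    have hdeg : f.natDegree = n := by
      refine le_antisymm hdegle (le_natDegree_of_ne_zero ?_)
      rw [hcoeffn]; norm_num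
    rw [Monic, leadingCoeff, hdeg, hcoeffn]
  -- each α i is an algebraic integer
  have hint : ∀ i, IsIntegral ℤ (α i) := by
    intro i
    refine ⟨f, hmonic, ?_⟩
    have : (map (Int.castRingHom ℂ) f).eval (α i) = 0 := by
      rw [hroots, eval_prod]
      exact Finset.prod_eq_zero (Finset.mem_univ i) (by simp)
    simpa [eval₂_eq_eval_map] using this
  set O := integralClosure ℤ ℂ with hO
  set a : Fin n → O := fun i => ⟨α i, hint i⟩ with ha
  -- factorization holds in O[X]
  have hfactO : map (algebraMap ℤ O) f = ∏ i : Fin n, (X - C (a i)) := by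
    apply Polynomial.map_injective (algebraMap O ℂ) Subtype.coe_injective
    rw [Polynomial.map_map, Polynomial.map_prod]
    have h1 : (algebraMap O ℂ).comp (algebraMap ℤ O) = Int.castRingHom ℂ := by
      ext; simp
    rw [h1, hroots]
    apply Finset.prod_congr rfl
    intro i _
    rw [Polynomial.map_sub, map_X, map_C]
    rfl
  -- 2 is not a unit in O
  have h2 : ¬ IsUnit (2 : O) := by
    intro h
    obtain ⟨u, hu⟩ := h.exists_right_inv
    have hint2 : IsIntegral ℤ ((u : ℂ)) := u.2
    have h2u : (2 : ℂ) * (u : ℂ) = 1 := by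
      have := congrArg (algebraMap O ℂ) hu
      rw [map_mul, map_ofNat, map_one] at this
      exact this
    have huv : (u : ℂ) = algebraMap ℚ ℂ (1/2) := by
      have h12 : algebraMap ℚ ℂ (1/2) = (1/2 : ℂ) := by norm_num
      rw [h12]
      field_simp
      linear_combination h2u
    rw [huv, isIntegral_algebraMap_iff (algebraMap ℚ ℂ).injective] at hint2
    obtain ⟨y, hy⟩ := IsIntegrallyClosed.isIntegral_iff.mp hint2
    have : (y : ℚ) * 2 = 1 := by
      rw [show ((y:ℚ)) = algebraMap ℤ ℚ y from rfl, hy]; norm_num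
    have : (y * 2 : ℤ) = 1 := by exact_mod_cast this
    omega
  obtain ⟨K, _, φ, hφ20⟩ := exists_field_hom_two_eq_zero O h2
  have hcast : ∀ z : ℤ, φ (algebraMap ℤ O z) = (z : K) := fun z => by
    rw [← RingHom.comp_apply, eq_intCast (φ.comp (algebraMap ℤ O))]
  have hφ2 : (2 : K) = 0 := by rw [← map_ofNat φ 2]; exact hφ20
  have hneg1 : (-1 : K) = 1 := by linear_combination -hφ2
  -- suppose D is even
  rw [← Int.not_even_iff_odd]
  intro hevenD
  obtain ⟨k, hk⟩ := hevenD
  -- D as element of O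
  have hDO : ((D : ℤ) : O) = ∏ i : Fin n, ∏ j : Fin n, if i < j then (a i - a j) ^ 2 else 1 := by
    apply Subtype.coe_injective
    push_cast
    rw [hD]
    apply Finset.prod_congr rfl
    intro i _
    apply Finset.prod_congr rfl
    intro j _
    split <;> simp [ha]
  -- D maps to 0 in K
  have hD0 : φ ((D : ℤ) : O) = 0 := by
    rw [show ((D:ℤ):O) = 2 * ((k:ℤ):O) by push_cast [hk]; ring]
    rw [map_mul, hφ20, zero_mul]
  -- so some two roots coincide in K
  set b : Fin n → K := fun i => φ (a i) with hb
  have hexists : ∃ i j : Fin n, i < j ∧ b i = b j := by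
    rw [hDO, map_prod] at hD0
    obtain ⟨i, -, hi⟩ := Finset.prod_eq_zero_iff.mp hD0
    rw [map_prod] at hi
    obtain ⟨j, -, hj⟩ := Finset.prod_eq_zero_iff.mp hi
    by_cases hij : i < j
    · refine ⟨i, j, hij, ?_⟩
      rw [if_pos hij, map_pow, map_sub] at hj
      have := pow_eq_zero_iff (n := 2) (by norm_num) |>.mp hj
      exact sub_eq_zero.mp this
    · rw [if_neg hij, map_one] at hj; exact absurd hj one_ne_zero
  obtain ⟨i, j, hij, hbij⟩ := hexists
  -- the image polynomial S
  set S : K[X] := ∏ i : Fin n, (X - C (b i)) with hS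
  have hSsum : S = ∑ i ∈ Finset.range (n + 1), X ^ i := by
    have h1 : S = map φ (map (algebraMap ℤ O) f) := by
      rw [hfactO, Polynomial.map_prod]
      simp [hS, hb]
    rw [h1, hf]
    rw [Polynomial.map_sum, Polynomial.map_sum]
    rw [← Fin.sum_univ_eq_sum_range (fun i => (X:K[X]) ^ i) (n+1)]
    apply Finset.sum_congr rfl
    intro i _
    rw [Polynomial.map_mul, Polynomial.map_mul, Polynomial.map_pow, Polynomial.map_pow,
      map_X, map_X, map_C, map_C]
    rcases hε i with h | h <;> rw [hcast, h] <;> simp [hneg1]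
  -- β := b i is a double root: S = (X - C β)^2 * T
  obtain ⟨T, hT⟩ : ∃ T : K[X], S = (X - C (b i)) ^ 2 * T := by
    refine ⟨∏ k ∈ (Finset.univ.erase i).erase j, (X - C (b k)), ?_⟩
    rw [hS, ← Finset.mul_prod_erase Finset.univ _ (Finset.mem_univ i),
        ← Finset.mul_prod_erase (Finset.univ.erase i) _
          (Finset.mem_erase.mpr ⟨hij.ne', Finset.mem_univ j⟩)]
    rw [← hbij]
    ring
  -- eval facts at β
  set β := b i with hβ
  have hevalS : S.eval β = 0 := by rw [hT]; simp
  have hevalS' : (derivative S).eval β = 0 := by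
    rw [hT, derivative_mul, derivative_pow]
    simp
  -- geometric series identity
  have hgeom : S * (X - 1) = X ^ (n + 1) - 1 := by
    rw [hSsum]; exact geom_sum_mul X (n + 1)
  have hder := congrArg derivative hgeom
  rw [derivative_mul, derivative_sub, derivative_X, derivative_one, derivative_sub,
    derivative_one, derivative_X_pow] at hder
  have heval := congrArg (eval β) hder
  simp only [eval_add, eval_mul, eval_sub, eval_X, eval_one, eval_zero, eval_pow,
    eval_C, hevalS, hevalS'] at heval
  -- (n+1 : K) = 1
  have hn1 : ((n + 1 : ℕ) : K) = 1 := by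
    obtain ⟨m', hm'⟩ := heven
    push_cast [hm']
    linear_combination (m' : K) * hφ2
  rw [hn1] at heval
  simp only [zero_mul, mul_zero, zero_add, add_zero, one_mul, sub_zero, zero_sub,
    mul_one] at heval
  -- β = 0
  have hβ0 : β = 0 := by
    have h0 : β ^ (n + 1 - 1) = 0 := by linear_combination -heval
    exact pow_eq_zero_iff (by omega) |>.mp h0
  -- but S(0) = 1
  have : S.eval 0 = 1 := by
    rw [hSsum, eval_finset_sum]
    rw [Finset.sum_eq_single 0]
    · simp
    · intro b _ hb; simp [zero_pow hb]
    · simp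
  rw [hβ0] at hevalS
  rw [hevalS] at this
  exact zero_ne_one this
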